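/- Let (S, μ, η) be a monad on C equipped with a differential combinator transformation ∂, and define λ_A := ⟨S(π₁), S(π₁+π₄)∘∂_{A×A}⟩ : S(A×A) → S(A)×S(A). Then λ is compatible with the zero map of the biproduct tangent structure: λ_A∘S(⟨1_A,0⟩) = ⟨1_{S(A)},0⟩ as morphisms S(A) → S(A)×S(A). -/
import Mathlib


open CategoryTheory CategoryTheory.Limits

universe v u

variable {C : Type u} [Category.{v} C] [Preadditive C] [HasBinaryBiproducts C]

/-- A differential combinator transformation on a monad `S`. -/
structure DiffCombTrans (S : Monad C) where
  d : ∀ A : C, S.obj A ⟶ S.obj (A ⊞ A)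
  natural : ∀ {A B : C} (f : A ⟶ B), S.map f ≫ d B = d A ≫ S.map (biprod.map f f)
  dc1 : ∀ A : C, d A ≫ S.map biprod.fst = 0
  dc2 : ∀ A : C,
    d A ≫ S.map (biprod.lift biprod.fst (biprod.lift biprod.snd biprod.snd)) =
      d A ≫ S.map (biprod.lift biprod.fst (biprod.lift biprod.snd 0)) +
      d A ≫ S.map (biprod.lift biprod.fst (biprod.lift 0 biprod.snd))
  dc3 : ∀ A : C, S.η.app A ≫ d A = biprod.lift 0 (𝟙 A) ≫ S.η.app (A ⊞ A)
  dc4 : ∀ A : C, S.μ.app A ≫ d A =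
    d (S.obj A) ≫
      S.map (biprod.fst ≫ S.map (biprod.lift (𝟙 A) 0) + biprod.snd ≫ d A) ≫
      S.μ.app (A ⊞ A)
  dc5 : ∀ A : C, d A ≫ d (A ⊞ A) ≫
      S.map (biprod.lift (biprod.fst ≫ biprod.fst) (biprod.snd ≫ biprod.snd)) = d A
  dc6 : ∀ A : C, d A ≫ d (A ⊞ A) ≫
      S.map (biprod.lift
        (biprod.lift (biprod.fst ≫ biprod.fst) (biprod.snd ≫ biprod.fst))
        (biprod.lift (biprod.fst ≫ biprod.snd) (biprod.snd ≫ biprod.snd))) =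
      d A ≫ d (A ⊞ A)

/-- `λ_A := ⟨S(π₁), S(π₁+π₄) ∘ ∂_{A×A}⟩ : S(A×A) ⟶ S(A) × S(A)`. -/
noncomputable def lamOf (S : Monad C) (p : DiffCombTrans S) (A : C) :
    S.obj (A ⊞ A) ⟶ S.obj A ⊞ S.obj A :=
  biprod.lift (S.map biprod.fst)
    (p.d (A ⊞ A) ≫ S.map (biprod.fst ≫ biprod.fst + biprod.snd ≫ biprod.snd))

/-- `λ` is compatible with the zero map of the biproduct tangent structure:
`λ_A ∘ S(⟨1_A,0⟩) = ⟨1_{S(A)},0⟩`. -/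
theorem lamOf_zero (S : Monad C) (p : DiffCombTrans S) (A : C) :
    S.map (biprod.lift (𝟙 A) 0) ≫ lamOf S p A = biprod.lift (𝟙 (S.obj A)) 0 := by
  apply biprod.hom_ext
  · simp [lamOf, ← S.map_comp]
  · rw [lamOf]
    simp only [Category.assoc, biprod.lift_snd]
    rw [← Category.assoc, p.natural, Category.assoc, ← S.map_comp]
    have : biprod.map (biprod.lift (𝟙 A) (0 : A ⟶ A)) (biprod.lift (𝟙 A) (0 : A ⟶ A)) ≫
        (biprod.fst ≫ biprod.fst + biprod.snd ≫ biprod.snd) =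
        (biprod.fst : A ⊞ A ⟶ A) := by
      simp [Preadditive.comp_add]
    rw [this, p.dc1]
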